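/- Let T be a bounded linear operator on a complex Hilbert space H and N an algebra norm on B(H). Then dw_N(T) ≥ (1/2) sqrt( N(T² + (T*)²) + 2 N(|T|)⁴ + 2 |N(Re(T))² + N(|T|)⁴ − N(Im(T))²| ). -/

import Mathlib

open ContinuousLinearMap Complex

variable {H : Type*} [NormedAddCommGroup H] [InnerProductSpace ℂ H] [CompleteSpace H]

/-- Real part of an operator: `Re(A) = (A + A*)/2`. -/
noncomputable def reOp (A : H →L[ℂ] H) : H →L[ℂ] H := (2 : ℂ)⁻¹ • (A + adjoint A)

/-- Imaginary part of an operator: `Im(A) = (A - A*)/(2i)`. -/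
noncomputable def imOp (A : H →L[ℂ] H) : H →L[ℂ] H := (2 * I)⁻¹ • (A - adjoint A)

/-- Modulus of an operator: `|A| = (A* A)^{1/2}`. -/
noncomputable def absOp (A : H →L[ℂ] H) : H →L[ℂ] H := CFC.sqrt (adjoint A * A)

/-- Generalized numerical radius. -/
noncomputable def wN (N : (H →L[ℂ] H) → ℝ) (T : H →L[ℂ] H) : ℝ :=
  ⨆ θ : ℝ, N (reOp (Complex.exp (θ * I) • T))

/-- Generalized Davis–Wielandt radius. -/
noncomputable def dwN (N : (H →L[ℂ] H) → ℝ) (T : H →L[ℂ] H) : ℝ :=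
  ⨆ θ : ℝ, Real.sqrt ((N (reOp (Complex.exp (θ * I) • T))) ^ 2
    + (N (reOp (Complex.exp (θ * I) • absOp T))) ^ 4)

set_option synthInstance.maxHeartbeats 1000000
set_option maxHeartbeats 1600000

lemma absOp_sa (T : H →L[ℂ] H) : IsSelfAdjoint (absOp T) :=
  IsSelfAdjoint.of_nonneg (CFC.sqrt_nonneg _)

lemma adjoint_eq_of_sa {A : H →L[ℂ] H} (hA : IsSelfAdjoint A) : adjoint A = A := by
  rw [← star_eq_adjoint]; exact hA

lemma reOp_self {A : H →L[ℂ] H} (hA : IsSelfAdjoint A) : reOp A = A := by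
  rw [reOp, adjoint_eq_of_sa hA, ← two_smul ℂ A, smul_smul]
  norm_num

lemma adjoint_smul' (c : ℂ) (A : H →L[ℂ] H) :
    adjoint (c • A) = (starRingEnd ℂ) c • adjoint A := by
  rw [← star_eq_adjoint, star_smul, star_eq_adjoint]; rfl

lemma reOp_I_smul_sa {A : H →L[ℂ] H} (hA : IsSelfAdjoint A) : reOp (I • A) = 0 := by
  rw [reOp, adjoint_smul', adjoint_eq_of_sa hA, Complex.conj_I, neg_smul, add_neg_cancel, smul_zero]

lemma reOp_I_smul (T : H →L[ℂ] H) : reOp (I • T) = (-1 : ℂ) • imOp T := by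
  rw [reOp, imOp, adjoint_smul', Complex.conj_I, neg_smul, ← sub_eq_add_neg, ← smul_sub,
    smul_smul, smul_smul]
  congr 1
  rw [mul_inv, Complex.inv_I]
  ring

lemma key_id (T : H →L[ℂ] H) :
    T ^ 2 + (adjoint T) ^ 2 = (2:ℂ) • reOp T ^ 2 + (-2:ℂ) • imOp T ^ 2 := by
  set B := adjoint T with hB
  rw [reOp, imOp, smul_pow, smul_pow, smul_smul, smul_smul, ← hB]
  have h1 : (2:ℂ) * ((2:ℂ)⁻¹)^2 = 2⁻¹ := by norm_num
  have h2 : (-2:ℂ) * ((2*I)⁻¹)^2 = 2⁻¹ := by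
    rw [inv_pow, mul_pow, Complex.I_sq]; norm_num
  rw [h1, h2, ← smul_add]
  have h3 : (T+B)^2 + (T-B)^2 = (2:ℂ) • (T^2 + B^2) := by
    rw [two_smul]; noncomm_ring
  rw [h3, smul_smul]
  norm_num

theorem stmt_6 (N : (H →L[ℂ] H) → ℝ) (T : H →L[ℂ] H)
    (hN0 : ∀ A : H →L[ℂ] H, 0 ≤ N A)
    (hNeq : ∀ A : H →L[ℂ] H, N A = 0 → A = 0)
    (hNadd : ∀ A B : H →L[ℂ] H, N (A + B) ≤ N A + N B)
    (hNsmul : ∀ (c : ℂ) (A : H →L[ℂ] H), N (c • A) = ‖c‖ * N A)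
    (hNmul : ∀ A B : H →L[ℂ] H, N (A * B) ≤ N A * N B) :
    dwN N T ≥ (1 / 2) * Real.sqrt (N (T ^ 2 + (adjoint T) ^ 2)
      + 2 * (N (absOp T)) ^ 4
      + 2 * |(N (reOp T)) ^ 2 + (N (absOp T)) ^ 4 - (N (imOp T)) ^ 2|) := by
  have hNzero : N 0 = 0 := by simpa using hNsmul 0 0
  set f : ℝ → ℝ := fun θ => Real.sqrt ((N (reOp (Complex.exp (θ * I) • T))) ^ 2
    + (N (reOp (Complex.exp (θ * I) • absOp T))) ^ 4) with hf
  have hre_bound : ∀ (θ : ℝ) (A : H →L[ℂ] H),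
      N (reOp (Complex.exp (θ * I) • A)) ≤ (N A + N (adjoint A)) / 2 := by
    intro θ A
    have hc : ‖Complex.exp (θ * I)‖ = 1 := by
      simpa using Complex.abs_exp_ofReal_mul_I θ
    have hc' : ‖(starRingEnd ℂ) (Complex.exp (θ * I))‖ = 1 := by
      rwa [RCLike.norm_conj]
    rw [reOp, hNsmul, adjoint_smul']
    have h1 : N (Complex.exp (θ * I) • A + (starRingEnd ℂ) (Complex.exp (θ * I)) • adjoint A)
        ≤ N A + N (adjoint A) := by
      refine (hNadd _ _).trans ?_
      rw [hNsmul, hNsmul, hc, hc', one_mul, one_mul]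
    have h2 : ‖(2:ℂ)⁻¹‖ = 1/2 := by norm_num
    rw [h2]
    nlinarith [hN0 (Complex.exp (θ * I) • A + (starRingEnd ℂ) (Complex.exp (θ * I)) • adjoint A)]
  have hbdd : BddAbove (Set.range f) := by
    refine ⟨Real.sqrt (((N T + N (adjoint T)) / 2) ^ 2
      + ((N (absOp T) + N (adjoint (absOp T))) / 2) ^ 4), ?_⟩
    rintro x ⟨θ, rfl⟩
    apply Real.sqrt_le_sqrt
    gcongr
    · exact hN0 _
    · exact hre_bound θ T
    · exact hN0 _
    · exact hre_bound θ (absOp T)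
  have hle : ∀ θ : ℝ, f θ ≤ dwN N T := fun θ => le_ciSup hbdd θ
  have hexp0 : Complex.exp ((0:ℝ) * I) = 1 := by
    norm_num
  have hexp2 : Complex.exp (((Real.pi/2 : ℝ) : ℂ) * I) = I := by
    rw [Complex.exp_mul_I, ← Complex.ofReal_cos, ← Complex.ofReal_sin,
      Real.cos_pi_div_two, Real.sin_pi_div_two]
    simp
  have hf0 : f 0 = Real.sqrt ((N (reOp T)) ^ 2 + (N (absOp T)) ^ 4) := by
    rw [hf]
    simp only [hexp0, Complex.ofReal_zero, zero_mul, Complex.exp_zero, one_smul,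
      reOp_self (absOp_sa T)]
  have hfpi : f (Real.pi / 2) = N (imOp T) := by
    rw [hf]
    simp only
    rw [Complex.ofReal_div, Complex.ofReal_ofNat]
    have : ((Real.pi : ℂ) / 2) = ((Real.pi / 2 : ℝ) : ℂ) := by push_cast; ring
    rw [this, hexp2, reOp_I_smul, reOp_I_smul_sa (absOp_sa T), hNzero, hNsmul]
    norm_num
    exact Real.sqrt_sq (hN0 _)
  -- bound on N (T^2 + T*^2)
  have hc : N (T ^ 2 + (adjoint T) ^ 2) ≤ 2 * (N (reOp T)) ^ 2 + 2 * (N (imOp T)) ^ 2 := by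
    rw [key_id T]
    have h1 : N ((2:ℂ) • reOp T ^ 2) = 2 * N (reOp T ^ 2) := by
      rw [hNsmul]; norm_num
    have h2 : N ((-2:ℂ) • imOp T ^ 2) = 2 * N (imOp T ^ 2) := by
      rw [hNsmul]; norm_num
    have h3 : N (reOp T ^ 2) ≤ N (reOp T) ^ 2 := by
      rw [sq, sq]; exact hNmul _ _
    have h4 : N (imOp T ^ 2) ≤ N (imOp T) ^ 2 := by
      rw [sq, sq]; exact hNmul _ _
    calc N ((2:ℂ) • reOp T ^ 2 + (-2:ℂ) • imOp T ^ 2)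
        ≤ N ((2:ℂ) • reOp T ^ 2) + N ((-2:ℂ) • imOp T ^ 2) := hNadd _ _
      _ = 2 * N (reOp T ^ 2) + 2 * N (imOp T ^ 2) := by rw [h1, h2]
      _ ≤ 2 * (N (reOp T)) ^ 2 + 2 * (N (imOp T)) ^ 2 := by linarith
  set r := N (reOp T); set s := N (absOp T); set m := N (imOp T)
  set a := r ^ 2 + s ^ 4 with ha
  set b := m ^ 2 with hb
  have hX : N (T ^ 2 + (adjoint T) ^ 2) + 2 * s ^ 4 + 2 * |a - b| ≤ 4 * max a b := by
    rcases le_total a b with h | h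
    · rw [abs_of_nonpos (by linarith), max_eq_right h]
      rw [ha, hb] at h ⊢
      linarith
    · rw [_root_.abs_of_nonneg (by linarith : (0:ℝ) ≤ a - b), max_eq_left h]
      rw [ha, hb] at h ⊢
      linarith
  have habs : |r ^ 2 + s ^ 4 - m ^ 2| = |a - b| := by rw [ha, hb]
  rw [ge_iff_le, habs]
  have hsqrt : Real.sqrt (N (T ^ 2 + (adjoint T) ^ 2) + 2 * s ^ 4 + 2 * |a - b|)
      ≤ 2 * Real.sqrt (max a b) := by
    calc Real.sqrt (N (T ^ 2 + (adjoint T) ^ 2) + 2 * s ^ 4 + 2 * |a - b|)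
        ≤ Real.sqrt (4 * max a b) := Real.sqrt_le_sqrt hX
      _ = 2 * Real.sqrt (max a b) := by
          rw [show (4:ℝ) = 2 ^ 2 by norm_num, Real.sqrt_mul (by positivity), Real.sqrt_sq (by norm_num)]
  have hmax : Real.sqrt (max a b) ≤ dwN N T := by
    rcases le_total a b with h | h
    · rw [max_eq_right h, hb, Real.sqrt_sq (hN0 _)]
      exact le_trans (le_of_eq hfpi.symm) (hle _)
    · rw [max_eq_left h, ← hf0]
      exact hle _
  calc 1 / 2 * Real.sqrt (N (T ^ 2 + (adjoint T) ^ 2) + 2 * s ^ 4 + 2 * |a - b|)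
      ≤ 1 / 2 * (2 * Real.sqrt (max a b)) := by linarith
    _ = Real.sqrt (max a b) := by ring
    _ ≤ dwN N T := hmax
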